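/- Let X_1,...,X_t be i.i.d. Bernoulli random variables with mean p, and let p̂_t = (1/t)∑_{s=1}^t X_s and V_t = (1/t)∑_{s=1}^t (X_s − p̂_t)². Then with probability at least 1 − δ, p ≥ p̂_t − √(3 V_t ln(3/δ)/t) − 5 ln(3/δ)/t, i.e., the empirical-Bernstein lower confidence bound max{0, p̂_t − √(3V_t ln(3/δ)/t) − 5 ln(3/δ)/t} does not exceed p. -/

import Mathlib

open MeasureTheory

/-- Polynomial upper bound on `e^x - 1 - x`. -/
lemma EB_psi_bound : ∀ x : ℝ, 0 ≤ x → (2 - 2*x/3) * (Real.exp x - 1 - x) ≤ x^2 := by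
  have key : MonotoneOn (fun x : ℝ => x^2 - (2 - 2*x/3) * (Real.exp x - 1 - x)) (Set.Ici 0) := by
    have hder : ∀ x : ℝ, HasDerivAt (fun x : ℝ => x^2 - (2 - 2*x/3) * (Real.exp x - 1 - x))
        (2*x + (2/3) * (Real.exp x - 1 - x) - (2 - 2*x/3) * (Real.exp x - 1)) x := by
      intro x
      have h1 : HasDerivAt (fun x : ℝ => x^2) (2*x) x := by
        simpa using hasDerivAt_pow 2 x
      have h2 : HasDerivAt (fun x : ℝ => 2 - 2*x/3) (-(2/3)) x := by
        have := ((hasDerivAt_id x).const_mul (2:ℝ)).div_const 3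
        have := (hasDerivAt_const x (2:ℝ)).sub this
        exact this.congr_deriv (by norm_num)
      have h3 : HasDerivAt (fun x : ℝ => Real.exp x - 1 - x) (Real.exp x - 1) x := by
        have := ((Real.hasDerivAt_exp x).sub_const 1).sub (hasDerivAt_id x)
        exact this
      have := h1.sub (h2.mul h3)
      exact this.congr_deriv (by ring)
    have hder2 : ∀ x : ℝ, HasDerivAt
        (fun x : ℝ => 2*x + (2/3) * (Real.exp x - 1 - x) - (2 - 2*x/3) * (Real.exp x - 1))
        (2 + (2/3) * (Real.exp x - 1) - ((-(2/3)) * (Real.exp x - 1) + (2 - 2*x/3) * Real.exp x))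
        x := by
      intro x
      have h1 : HasDerivAt (fun x : ℝ => 2*x) (2:ℝ) x := by
        simpa using (hasDerivAt_id x).const_mul (2:ℝ)
      have h3 : HasDerivAt (fun x : ℝ => Real.exp x - 1 - x) (Real.exp x - 1) x := by
        have := ((Real.hasDerivAt_exp x).sub_const 1).sub (hasDerivAt_id x)
        exact this
      have h2 : HasDerivAt (fun x : ℝ => 2 - 2*x/3) (-(2/3)) x := by
        have := ((hasDerivAt_id x).const_mul (2:ℝ)).div_const 3
        have := (hasDerivAt_const x (2:ℝ)).sub this
        exact this.congr_deriv (by norm_num)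
      have h4 : HasDerivAt (fun x : ℝ => Real.exp x - 1) (Real.exp x) x := by
        simpa using (Real.hasDerivAt_exp x).sub_const 1
      exact (h1.add (h3.const_mul (2/3))).sub (h2.mul h4)
    have hinner : ∀ x : ℝ, 0 ≤ x →
        0 ≤ 2*x + (2/3) * (Real.exp x - 1 - x) - (2 - 2*x/3) * (Real.exp x - 1) := by
      intro x hx
      have keyin : MonotoneOn
          (fun x : ℝ => 2*x + (2/3) * (Real.exp x - 1 - x) - (2 - 2*x/3) * (Real.exp x - 1))
          (Set.Ici 0) := by
        apply monotoneOn_of_deriv_nonneg (convex_Ici 0)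
        · exact Continuous.continuousOn (by continuity)
        · intro y hy
          exact (hder2 y).differentiableAt.differentiableWithinAt
        · intro y hy
          rw [(hder2 y).deriv]
          have hy0 : (0:ℝ) ≤ y := le_of_lt (by simpa using hy)
          have h5 : (1 - y) * Real.exp y ≤ 1 := by
            have h6 : 1 - y ≤ Real.exp (-y) := by
              have := Real.add_one_le_exp (-y); linarith
            calc (1 - y) * Real.exp y ≤ Real.exp (-y) * Real.exp y :=
                  mul_le_mul_of_nonneg_right h6 (Real.exp_pos y).le
              _ = 1 := by rw [← Real.exp_add]; simp
          nlinarith [Real.exp_pos y]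
      have h0 : (fun x : ℝ => 2*x + (2/3) * (Real.exp x - 1 - x)
          - (2 - 2*x/3) * (Real.exp x - 1)) 0 = 0 := by simp
      have := keyin (Set.self_mem_Ici) (Set.mem_Ici.mpr hx) hx
      rw [h0] at this
      exact this
    apply monotoneOn_of_deriv_nonneg (convex_Ici 0)
    · exact Continuous.continuousOn (by continuity)
    · intro y hy
      exact (hder y).differentiableAt.differentiableWithinAt
    · intro y hy
      rw [(hder y).deriv]
      exact hinner y (le_of_lt (by simpa using hy))
  intro x hx
  have := key (Set.self_mem_Ici) (Set.mem_Ici.mpr hx) hx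
  simp only [Real.exp_zero] at this
  nlinarith [this]

/-- Bennett-type mgf bound for a Bernoulli(`p`) variable. -/
lemma EB_bennett_mgf (p : ℝ) (hp0 : 0 ≤ p) (hp1 : p ≤ 1) :
    ∀ x : ℝ, 0 ≤ x →
      1 + p * (Real.exp x - 1) ≤ Real.exp (p*x + p*(1-p)*(Real.exp x - 1 - x)) := by
  have hD : ∀ x : ℝ, 0 ≤ x → (1:ℝ) ≤ 1 + p * (Real.exp x - 1) := by
    intro x hx
    have : (1:ℝ) ≤ Real.exp x := by simpa using Real.exp_le_exp.mpr hx
    nlinarith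
  have hDpos : ∀ x : ℝ, 0 ≤ x → (0:ℝ) < 1 + p * (Real.exp x - 1) := fun x hx =>
    lt_of_lt_of_le one_pos (hD x hx)
  have key : MonotoneOn
      (fun x : ℝ => p*x + p*(1-p)*(Real.exp x - 1 - x) - Real.log (1 + p * (Real.exp x - 1)))
      (Set.Ici 0) := by
    have hder : ∀ x : ℝ, 0 ≤ x → HasDerivAt
        (fun x : ℝ => p*x + p*(1-p)*(Real.exp x - 1 - x) - Real.log (1 + p * (Real.exp x - 1)))
        (p + p*(1-p)*(Real.exp x - 1) - p * Real.exp x / (1 + p * (Real.exp x - 1))) x := by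
      intro x hx
      have h1 : HasDerivAt (fun x : ℝ => p*x) p x := by
        simpa using (hasDerivAt_id x).const_mul p
      have h3 : HasDerivAt (fun x : ℝ => Real.exp x - 1 - x) (Real.exp x - 1) x := by
        have := ((Real.hasDerivAt_exp x).sub_const 1).sub (hasDerivAt_id x)
        exact this
      have h4 : HasDerivAt (fun x : ℝ => 1 + p * (Real.exp x - 1)) (p * Real.exp x) x := by
        have := (((Real.hasDerivAt_exp x).sub_const 1).const_mul p).const_add 1
        simpa using this
      have h5 : HasDerivAt (fun x : ℝ => Real.log (1 + p * (Real.exp x - 1)))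
          (p * Real.exp x / (1 + p * (Real.exp x - 1))) x :=
        h4.log (ne_of_gt (hDpos x hx))
      exact (h1.add (h3.const_mul (p*(1-p)))).sub h5
    apply monotoneOn_of_deriv_nonneg (convex_Ici 0)
    · apply ContinuousOn.sub
      · exact Continuous.continuousOn (by continuity)
      · apply ContinuousOn.log
        · exact Continuous.continuousOn (by continuity)
        · intro x hx; exact ne_of_gt (hDpos x hx)
    · intro y hy
      have hy0 : (0:ℝ) ≤ y := le_of_lt (by simpa using hy)
      exact (hder y hy0).differentiableAt.differentiableWithinAt
    · intro y hy
      have hy0 : (0:ℝ) ≤ y := le_of_lt (by simpa using hy)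
      rw [(hder y hy0).deriv]
      have hDy := hDpos y hy0
      have hexp : (1:ℝ) ≤ Real.exp y := by simpa using Real.exp_le_exp.mpr hy0
      have heq : p + p*(1-p)*(Real.exp y - 1) - p * Real.exp y / (1 + p * (Real.exp y - 1))
          = p^2*(1-p)*(Real.exp y - 1)^2 / (1 + p * (Real.exp y - 1)) := by
        field_simp
        ring
      rw [heq]
      apply div_nonneg _ hDy.le
      exact mul_nonneg (mul_nonneg (sq_nonneg p) (by linarith)) (sq_nonneg _)
  intro x hx
  have h0 : (fun x : ℝ => p*x + p*(1-p)*(Real.exp x - 1 - x)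
      - Real.log (1 + p * (Real.exp x - 1))) 0 = 0 := by simp
  have hmono := key (Set.self_mem_Ici) (Set.mem_Ici.mpr hx) hx
  rw [h0] at hmono
  simp only at hmono
  have hlog : Real.log (1 + p * (Real.exp x - 1)) ≤ p*x + p*(1-p)*(Real.exp x - 1 - x) := by
    linarith
  calc 1 + p * (Real.exp x - 1) = Real.exp (Real.log (1 + p * (Real.exp x - 1))) :=
        (Real.exp_log (hDpos x hx)).symm
    _ ≤ _ := Real.exp_le_exp.mpr hlog

/-- Deterministic step: the empirical Bernstein threshold dominates the
true-variance Bernstein threshold. -/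
lemma EB_det_step (p q B : ℝ) (hp0 : 0 ≤ p) (hp1 : p ≤ 1) (hq0 : 0 ≤ q) (hq1 : q ≤ 1)
    (hB : 0 < B)
    (hbad : p < q - Real.sqrt (3 * (q * (1 - q)) * B) - 5 * B) :
    p + (Real.sqrt (2 * (p * (1 - p)) * B) + (2/3) * B) ≤ q := by
  have hV0 : 0 ≤ q * (1 - q) := mul_nonneg hq0 (by linarith)
  have ha0 : 0 ≤ p * (1 - p) := mul_nonneg hp0 (by linarith)
  have hs3 : 0 ≤ Real.sqrt (3 * (q * (1 - q)) * B) := Real.sqrt_nonneg _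
  have hd5 : Real.sqrt (3 * (q * (1 - q)) * B) + 5 * B < q - p := by linarith
  have hdpos : 0 < q - p := by nlinarith
  have haVd : p * (1 - p) ≤ q * (1 - q) + (q - p) := by nlinarith
  have hsq3 := Real.sq_sqrt (show (0:ℝ) ≤ 3 * (q * (1 - q)) * B by positivity)
  have h3 : Real.sqrt (2 * (q - p) * B) ≤ 3 * (q - p) / 20 + 10 * B / 3 := by
    rw [Real.sqrt_le_iff]
    constructor
    · nlinarith
    · nlinarith [sq_nonneg (3*(q-p)/20 - 10*B/3)]
  have h1 : Real.sqrt (2 * (p * (1 - p)) * B)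
      ≤ (17/20) * Real.sqrt (3 * (q * (1 - q)) * B) + Real.sqrt (2 * (q - p) * B) := by
    rw [Real.sqrt_le_iff]
    have hsq2 := Real.sq_sqrt (show (0:ℝ) ≤ 2 * (q - p) * B by positivity)
    have hs2 := Real.sqrt_nonneg (2 * (q - p) * B)
    constructor
    · positivity
    · nlinarith [mul_nonneg hs3 hs2]
  have hs2' := Real.sqrt_nonneg (2 * (q - p) * B)
  linarith

/-- Numeric bound on the Chernoff exponent for the Bernstein rate. -/
lemma EB_exponent_bound (T a L B ε c lam : ℝ) (ha : 0 < a) (hL : 0 < L) (hT : 0 < T)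
    (hB : B = L / T) (hε : ε = Real.sqrt (2*a*B) + 2/3*B) (hc : c = a + ε/3)
    (hlam : lam = ε/c) :
    T * (a * (Real.exp lam - 1 - lam)) - lam * (T * ε) ≤ -L := by
  have hB0 : 0 < B := by rw [hB]; positivity
  have hs2 : 0 ≤ Real.sqrt (2*a*B) := Real.sqrt_nonneg _
  have hssq : Real.sqrt (2*a*B) ^ 2 = 2*a*B := Real.sq_sqrt (by positivity)
  have hε0 : 0 < ε := by rw [hε]; positivity
  have hc0 : 0 < c := by rw [hc]; positivity
  have hlam0 : 0 ≤ lam := by rw [hlam]; positivity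
  have hTB : T * B = L := by rw [hB]; field_simp
  set h : ℝ := Real.exp lam - 1 - lam with hh
  have hh0 : 0 ≤ h := by
    have := Real.add_one_le_exp lam; rw [hh]; linarith
  have hpsi : (2 - 2*lam/3) * h ≤ lam^2 := EB_psi_bound lam hlam0
  have hm : 2 - 2*lam/3 = 2*a/c := by
    rw [hlam, hc]; field_simp; ring
  have hach : 2*a*h*c ≤ ε^2 := by
    have h1 : (2*a/c) * h ≤ lam^2 := hm ▸ hpsi
    have h2 : lam^2 = ε^2/c^2 := by rw [hlam, div_pow]
    have h3 := mul_le_mul_of_nonneg_right h1 (sq_nonneg c)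
    have h4 : (2*a/c)*h*c^2 = 2*a*h*c := by field_simp
    have h5 : lam^2*c^2 = ε^2 := by rw [h2]; field_simp
    rw [h4, h5] at h3
    exact h3
  have hkey : T*ε^2 - 2*(T*B)*c = (2/3)*(T*B)*Real.sqrt (2*a*B) := by
    rw [hc, hε]; linear_combination T * hssq
  have htε : 2*L*c ≤ T*ε^2 := by
    have h6 : 0 ≤ (2/3)*(T*B)*Real.sqrt (2*a*B) := by positivity
    rw [← hTB]; linarith [hkey]
  have e0 : T*(a*h) - lam*(T*ε) = (T*(a*h)*c - T*ε^2)/c := by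
    rw [hlam]; field_simp
  rw [e0, div_le_iff₀ hc0]
  have h7 := mul_le_mul_of_nonneg_left hach (le_of_lt (by positivity : (0:ℝ) < T/2))
  nlinarith [htε, h7]

/-- Empirical Bernstein bound: for i.i.d. Bernoulli(`p`) variables `X 1, ..., X t` with
empirical mean `p̂_t` and empirical variance `V_t`, with probability at least `1 - δ`,
`p ≥ p̂_t - √(3 V_t ln(3/δ) / t) - 5 ln(3/δ) / t`. -/
theorem stmt8 {Ω : Type*} [MeasurableSpace Ω] (μ : Measure Ω) [IsProbabilityMeasure μ]
    (t : ℕ) (ht : 1 ≤ t) (p : ℝ) (hp : p ∈ Set.Icc (0 : ℝ) 1)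
    (X : Fin t → Ω → ℝ)
    (hmeas : ∀ s, Measurable (X s))
    (hindep : ProbabilityTheory.iIndepFun X μ)
    (hBer : ∀ s, ∀ᵐ ω ∂μ, X s ω = 0 ∨ X s ω = 1)
    (hmean : ∀ s, (∫ ω, X s ω ∂μ) = p)
    (δ : ℝ) (hδ : δ ∈ Set.Ioo (0 : ℝ) 1) :
    1 - δ ≤ (μ {ω |
        (∑ s, X s ω) / t
          - Real.sqrt (3 * ((1 / (t : ℝ)) * ∑ s, (X s ω - (∑ i, X i ω) / t) ^ 2)
              * Real.log (3 / δ) / t)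
          - 5 * Real.log (3 / δ) / t ≤ p}).toReal := by
  obtain ⟨hp0, hp1⟩ := hp
  obtain ⟨hδ0, hδ1⟩ := hδ
  set L : ℝ := Real.log (3 / δ) with hLdef
  have ht0 : (0:ℝ) < (t:ℝ) := by exact_mod_cast Nat.lt_of_lt_of_le Nat.zero_lt_one ht
  have h3δ : (1:ℝ) < 3 / δ := by
    rw [lt_div_iff₀ hδ0]; linarith
  have hL : 0 < L := Real.log_pos h3δ
  set f : Ω → ℝ := fun ω =>
      (∑ s, X s ω) / t
        - Real.sqrt (3 * ((1 / (t : ℝ)) * ∑ s, (X s ω - (∑ i, X i ω) / t) ^ 2) * L / t)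
        - 5 * L / t with hfdef
  have hsum_meas : Measurable fun ω => ∑ s, X s ω :=
    Finset.measurable_sum _ (fun i _ => hmeas i)
  have hf : Measurable f := by
    apply Measurable.sub
    apply Measurable.sub
    · exact hsum_meas.div_const _
    · apply Measurable.sqrt
      apply Measurable.div_const
      apply Measurable.mul_const
      apply Measurable.const_mul
      apply Measurable.const_mul
      exact Finset.measurable_sum _ (fun i _ =>
        ((hmeas i).sub (hsum_meas.div_const _)).pow_const 2)
    · exact measurable_const
  have hmeasS : MeasurableSet {ω | f ω ≤ p} := measurableSet_le hf measurable_const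
  have hcompl : (μ {ω | f ω ≤ p}).toReal + (μ {ω | f ω ≤ p}ᶜ).toReal = 1 := by
    have h := measure_add_measure_compl (μ := μ) hmeasS
    have h1 := congrArg ENNReal.toReal h
    rwa [ENNReal.toReal_add (measure_ne_top _ _) (measure_ne_top _ _), measure_univ,
      ENNReal.toReal_one] at h1
  have hXint : ∀ s, Integrable (X s) μ := by
    intro s
    apply Integrable.mono' (integrable_const (1:ℝ)) (hmeas s).aestronglyMeasurable
    filter_upwards [hBer s] with ω h
    rcases h with h | h <;> rw [h] <;> norm_num
  have main : (μ {ω | f ω ≤ p}ᶜ).toReal ≤ δ → 1 - δ ≤ (μ {ω | f ω ≤ p}).toReal := by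
    intro h; linarith
  suffices hbad : (μ {ω | f ω ≤ p}ᶜ).toReal ≤ δ by
    have := main hbad
    convert this using 3
  rcases eq_or_lt_of_le hp0 with hp0' | hp0'
  · -- p = 0 : all X are a.e. 0
    have hX0 : ∀ s, X s =ᵐ[μ] 0 := by
      intro s
      have hnn : 0 ≤ᵐ[μ] X s := by
        filter_upwards [hBer s] with ω h
        rcases h with h | h <;> rw [h] <;> norm_num
      exact (integral_eq_zero_iff_of_nonneg_ae hnn (hXint s)).mp (by rw [hmean s, ← hp0'])
    have hae : ∀ᵐ ω ∂μ, f ω ≤ p := by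
      have hall : ∀ᵐ ω ∂μ, ∀ s, X s ω = 0 := ae_all_iff.mpr (fun s => hX0 s)
      filter_upwards [hall] with ω h
      simp only [hfdef]
      have h1 : ∑ s, X s ω = 0 := Finset.sum_eq_zero (fun s _ => h s)
      rw [h1]
      have h3 : ∑ s, (X s ω - 0 / (t:ℝ)) ^ 2 = 0 :=
        Finset.sum_eq_zero (fun s _ => by rw [h s]; norm_num)
      rw [h3]
      simp only [mul_zero, zero_mul, zero_div, mul_zero, Real.sqrt_zero]
      rw [← hp0']
      have : 0 ≤ 5 * L / ↑t := by positivity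
      simp only [zero_div, zero_sub, neg_sub, sub_zero]
      linarith [this]
    have h0 : μ {ω | f ω ≤ p}ᶜ = 0 := by
      rw [Set.compl_setOf]
      exact hae
    rw [h0]; simp; linarith
  rcases eq_or_lt_of_le hp1 with hp1' | hp1'
  · -- p = 1 : all X are a.e. 1
    have hX1 : ∀ s, X s =ᵐ[μ] (fun _ => 1) := by
      intro s
      have hnn : 0 ≤ᵐ[μ] (fun ω => 1 - X s ω) := by
        filter_upwards [hBer s] with ω h
        rcases h with h | h <;> rw [h] <;> norm_num
      have hint : Integrable (fun ω => 1 - X s ω) μ := (integrable_const 1).sub (hXint s)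
      have hz : (∫ ω, (1 - X s ω) ∂μ) = 0 := by
        rw [integral_sub (integrable_const 1) (hXint s), hmean s]
        simp [hp1']
      have := (integral_eq_zero_iff_of_nonneg_ae hnn hint).mp hz
      filter_upwards [this] with ω h
      have : 1 - X s ω = 0 := h
      linarith
    have hae : ∀ᵐ ω ∂μ, f ω ≤ p := by
      have hall : ∀ᵐ ω ∂μ, ∀ s, X s ω = 1 := ae_all_iff.mpr (fun s => hX1 s)
      filter_upwards [hall] with ω h
      simp only [hfdef]
      have h1 : ∑ s, X s ω = (t:ℝ) := by
        rw [Finset.sum_congr rfl (fun s _ => h s)]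
        simp
      rw [h1]
      have h3 : ∑ s, (X s ω - (t:ℝ) / (t:ℝ)) ^ 2 = 0 :=
        Finset.sum_eq_zero (fun s _ => by
          rw [h s, div_self ht0.ne']; norm_num)
      rw [h3]
      simp only [mul_zero, zero_mul, zero_div, mul_zero, Real.sqrt_zero]
      rw [div_self ht0.ne', hp1']
      have : 0 ≤ 5 * L / ↑t := by positivity
      linarith [this]
    have h0 : μ {ω | f ω ≤ p}ᶜ = 0 := by
      rw [Set.compl_setOf]
      exact hae
    rw [h0]; simp; linarith
  -- main case : 0 < p < 1
  set a : ℝ := p * (1 - p) with hadef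
  have ha : 0 < a := mul_pos hp0' (by linarith)
  set B : ℝ := L / t with hBdef
  have hB : 0 < B := div_pos hL ht0
  set ε : ℝ := Real.sqrt (2 * a * B) + 2/3 * B with hεdef
  have hs2 : 0 ≤ Real.sqrt (2 * a * B) := Real.sqrt_nonneg _
  have hε : 0 < ε := by positivity
  set c : ℝ := a + ε / 3 with hcdef
  have hc : 0 < c := by positivity
  set lam : ℝ := ε / c with hlamdef
  have hlam : 0 < lam := div_pos hε hc
  have hexpint : ∀ s, Integrable (fun ω => Real.exp (lam * X s ω)) μ := by
    intro s
    apply Integrable.mono' (integrable_const (Real.exp lam))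
      ((hmeas s).const_mul lam).exp.aestronglyMeasurable
    filter_upwards [hBer s] with ω h
    rcases h with h | h <;> rw [h]
    · rw [mul_zero, Real.exp_zero]
      simpa using Real.one_le_exp hlam.le
    · rw [mul_one]
      simp [Real.norm_eq_abs, abs_of_nonneg (Real.exp_nonneg _)]
  have hmgf : ∀ s, ProbabilityTheory.mgf (X s) μ lam = 1 + p * (Real.exp lam - 1) := by
    intro s
    have hcongr : (fun ω => Real.exp (lam * X s ω))
        =ᵐ[μ] (fun ω => 1 + (Real.exp lam - 1) * X s ω) := by
      filter_upwards [hBer s] with ω h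
      rcases h with h | h <;> rw [h] <;> norm_num
    rw [ProbabilityTheory.mgf, integral_congr_ae hcongr,
      integral_add (integrable_const 1) ((hXint s).const_mul _), integral_const_mul, hmean s]
    simp [measure_univ]
    ring
  have hintsum : Integrable (fun ω => Real.exp (lam * (∑ i, X i) ω)) μ :=
    hindep.integrable_exp_mul_sum hmeas (fun i _ => hexpint i)
  have hcher := ProbabilityTheory.measure_ge_le_exp_mul_mgf (X := ∑ i, X i) (μ := μ)
    ((t:ℝ) * (p + ε)) hlam.le hintsum
  have hmgfsum : ProbabilityTheory.mgf (∑ i, X i) μ lam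
      = (1 + p * (Real.exp lam - 1)) ^ t := by
    rw [hindep.mgf_sum hmeas Finset.univ]
    rw [Finset.prod_congr rfl (fun i _ => hmgf i)]
    simp [Finset.card_univ]
  have hexpo := EB_exponent_bound (t:ℝ) a L B ε c lam ha hL ht0 hBdef hεdef hcdef hlamdef
  have hexp_bound : Real.exp (-lam * ((t:ℝ) * (p + ε)))
      * (1 + p * (Real.exp lam - 1)) ^ t ≤ δ / 3 := by
    have hben := EB_bennett_mgf p hp0 hp1 lam hlam.le
    have hD0 : (0:ℝ) ≤ 1 + p * (Real.exp lam - 1) := by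
      have : (1:ℝ) ≤ Real.exp lam := Real.one_le_exp hlam.le
      nlinarith
    have hpow : (1 + p * (Real.exp lam - 1)) ^ t
        ≤ Real.exp ((t:ℝ) * (p * lam + a * (Real.exp lam - 1 - lam))) := by
      calc (1 + p * (Real.exp lam - 1)) ^ t
          ≤ (Real.exp (p * lam + a * (Real.exp lam - 1 - lam))) ^ t := by
            apply pow_le_pow_left₀ hD0
            rw [hadef]
            exact hben
        _ = Real.exp ((t:ℝ) * (p * lam + a * (Real.exp lam - 1 - lam))) := by
            rw [← Real.exp_nat_mul]
    have hexponent : -lam * ((t:ℝ) * (p + ε))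
        + (t:ℝ) * (p * lam + a * (Real.exp lam - 1 - lam)) ≤ -L := by
      calc -lam * ((t:ℝ) * (p + ε)) + (t:ℝ) * (p * lam + a * (Real.exp lam - 1 - lam))
          = (t:ℝ) * (a * (Real.exp lam - 1 - lam)) - lam * ((t:ℝ) * ε) := by ring
        _ ≤ -L := hexpo
    calc Real.exp (-lam * ((t:ℝ) * (p + ε))) * (1 + p * (Real.exp lam - 1)) ^ t
        ≤ Real.exp (-lam * ((t:ℝ) * (p + ε)))
            * Real.exp ((t:ℝ) * (p * lam + a * (Real.exp lam - 1 - lam))) := by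
          apply mul_le_mul_of_nonneg_left hpow (Real.exp_nonneg _)
      _ = Real.exp (-lam * ((t:ℝ) * (p + ε))
            + (t:ℝ) * (p * lam + a * (Real.exp lam - 1 - lam))) := (Real.exp_add _ _).symm
      _ ≤ Real.exp (-L) := Real.exp_le_exp.mpr hexponent
      _ = δ / 3 := by
          rw [hLdef, Real.exp_neg, Real.exp_log (by positivity), inv_div]
  -- a.e. inclusion of the bad set in the Chernoff set
  have hsub : ∀ᵐ ω ∂μ, ω ∈ {ω | f ω ≤ p}ᶜ → ω ∈ {ω | (t:ℝ) * (p + ε) ≤ (∑ i, X i) ω} := by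
    filter_upwards [ae_all_iff.mpr hBer] with ω h01 hmem
    simp only [Set.mem_compl_iff, Set.mem_setOf_eq, not_le] at hmem
    simp only [Set.mem_setOf_eq, Finset.sum_apply]
    set S : ℝ := ∑ s, X s ω with hSdef
    have hS0 : 0 ≤ S :=
      Finset.sum_nonneg fun s _ => by rcases h01 s with h|h <;> rw [h] <;> norm_num
    have hSt : S ≤ (t:ℝ) := by
      calc S ≤ ∑ _s : Fin t, (1:ℝ) :=
            Finset.sum_le_sum (fun s _ => by rcases h01 s with h|h <;> rw [h] <;> norm_num)
        _ = (t:ℝ) := by simp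
    set q : ℝ := S / (t:ℝ) with hqdef
    have hq0 : 0 ≤ q := div_nonneg hS0 ht0.le
    have hq1 : q ≤ 1 := by rw [hqdef, div_le_one ht0]; exact hSt
    have hVid : (1/(t:ℝ)) * ∑ s, (X s ω - q)^2 = q * (1 - q) := by
      have hVsum : ∑ s, (X s ω - q)^2 = S - 2*q*S + (t:ℝ)*q^2 := by
        have hterm : ∀ s : Fin t, (X s ω - q)^2 = X s ω - 2*q*X s ω + q^2 := by
          intro s; rcases h01 s with h|h <;> rw [h] <;> ring
        rw [Finset.sum_congr rfl (fun s _ => hterm s)]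
        rw [Finset.sum_add_distrib, Finset.sum_sub_distrib, ← Finset.mul_sum,
          Finset.sum_const, Finset.card_univ, Fintype.card_fin, nsmul_eq_mul, ← hSdef]
      rw [hVsum, hqdef]
      field_simp
      ring
    -- rewrite hmem using the variance identity
    rw [hfdef] at hmem
    simp only at hmem
    rw [hVid] at hmem
    have hform1 : 3 * (q * (1 - q)) * L / (t:ℝ) = 3 * (q * (1 - q)) * B := by
      rw [hBdef]; ring
    have hform2 : 5 * L / (t:ℝ) = 5 * B := by rw [hBdef]; ring
    rw [hform1, hform2] at hmem
    have hdet := EB_det_step p q B hp0 hp1 hq0 hq1 hB hmem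
    have hpq : p + ε ≤ q := by
      rw [hεdef, hadef]
      exact hdet
    have := (le_div_iff₀ ht0).mp (hqdef ▸ hpq)
    calc (t:ℝ) * (p + ε) = (p + ε) * (t:ℝ) := by ring
      _ ≤ S := this
  have hle : μ {ω | f ω ≤ p}ᶜ ≤ μ {ω | (t:ℝ) * (p + ε) ≤ (∑ i, X i) ω} :=
    measure_mono_ae (hsub.mono fun ω h => h)
  calc (μ {ω | f ω ≤ p}ᶜ).toReal
      ≤ (μ {ω | (t:ℝ) * (p + ε) ≤ (∑ i, X i) ω}).toReal :=
        ENNReal.toReal_mono (measure_ne_top _ _) hle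
    _ ≤ Real.exp (-lam * ((t:ℝ) * (p + ε))) * ProbabilityTheory.mgf (∑ i, X i) μ lam := hcher
    _ = Real.exp (-lam * ((t:ℝ) * (p + ε))) * (1 + p * (Real.exp lam - 1)) ^ t := by
        rw [hmgfsum]
    _ ≤ δ / 3 := hexp_bound
    _ ≤ δ := by linarith
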